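/- There exists a 2-edge-coloring χ of the complete graph on the positive integers such that for all positive integers a and d, the pairs {a, a+d} and {a, a+2d} receive different colors under χ; in particular, no 3-term arithmetic progression a, a+d, a+2d with d ≥ 1 is a monochromatic clique under χ. -/

import Mathlib

open Fin.NatCast

lemma fin2_succ_ne (n : ℕ) : ((n : Fin 2)) ≠ (((n + 1 : ℕ)) : Fin 2) := by
  simp only [Ne, Fin.ext_iff, Fin.val_natCast]
  omega

/-- There is a 2-edge-coloring of the complete graph on the positive integers such that for
all `a, d ≥ 1` the edges `{a, a+d}` and `{a, a+2d}` get different colors; in particular no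
3-term arithmetic progression is a monochromatic clique. -/
theorem no_monochromatic_three_ap :
    ∃ χ : Sym2 ℕ → Fin 2,
      (∀ a d : ℕ, 0 < a → 0 < d → χ s(a, a + d) ≠ χ s(a, a + 2 * d)) ∧
      (∀ a d : ℕ, 0 < a → 0 < d →
        ¬ ∃ c : Fin 2, ∀ x ∈ ({a, a + d, a + 2 * d} : Finset ℕ),
          ∀ y ∈ ({a, a + d, a + 2 * d} : Finset ℕ), x ≠ y → χ s(x, y) = c) := by
  have key : ∀ a d : ℕ, 0 < d →
      (Sym2.lift ⟨fun x y => ((Nat.dist x y).factorization 2 : Fin 2),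
        fun x y => by dsimp only; rw [Nat.dist_comm]⟩ : Sym2 ℕ → Fin 2) s(a, a + d) ≠
      (Sym2.lift ⟨fun x y => ((Nat.dist x y).factorization 2 : Fin 2),
        fun x y => by dsimp only; rw [Nat.dist_comm]⟩ : Sym2 ℕ → Fin 2) s(a, a + 2 * d) := by
    intro a d hd
    have hdist1 : Nat.dist a (a + d) = d := by simp [Nat.dist]
    have hdist2 : Nat.dist a (a + 2 * d) = 2 * d := by simp [Nat.dist]
    have hfac : (2 * d).factorization 2 = d.factorization 2 + 1 := by
      rw [Nat.factorization_mul (by norm_num) hd.ne']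
      simp [Nat.Prime.factorization (by norm_num : Nat.Prime 2)]
      ring
    simp only [Sym2.lift_mk, hdist1, hdist2, hfac]
    exact fin2_succ_ne _
  refine ⟨_, fun a d _ hd => key a d hd, ?_⟩
  intro a d ha hd ⟨c, hc⟩
  have e1 := hc a (by simp) (a + d) (by simp) (by omega)
  have e2 := hc a (by simp) (a + 2 * d) (by simp) (by omega)
  exact key a d hd (e1.trans e2.symm)
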